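/- arXiv:1907.06461 — 2 statements merged into one kernel-verified Lean document; each statement's English description precedes it below -/
import Mathlib

section
/- Let n ≥ 2 and let G : cl(𝔹) → cl(𝔹) be a continuous surjection whose restriction to the open unit ball 𝔹 is a homeomorphism of 𝔹 onto 𝔹. Then G maps ∂𝔹 onto ∂𝔹 and the restriction G : ∂𝔹 → ∂𝔹 is monotone; that is, for every y ∈ ∂𝔹 the preimage G⁻¹(y) is a connected subset of ∂𝔹. -/
open MeasureTheory Metric Set
open scoped ENNReal NNReal

noncomputable section

abbrev Euc (n : ℕ) : Type := EuclideanSpace ℝ (Fin n)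

/-- Operator norm of an `n × n` real matrix, viewed as a linear operator on Euclidean space. -/
noncomputable def opNorm {n : ℕ} (M : Matrix (Fin n) (Fin n) ℝ) : ℝ :=
  ‖LinearMap.toContinuousLinearMap (Matrix.toEuclideanLin M)‖

/-- `g` belongs to the Sobolev class `W^{1,p}(Ω, ℝⁿ)` with weak differential `Dg`:
`g` and `Dg` are locally integrable on `Ω`, the integration-by-parts identity holds against
every smooth compactly supported test function supported in `Ω`, and `|Dg| ∈ L^p(Ω)`. -/
structure MemSobolev {n : ℕ} (p : ℝ) (Ω : Set (Euc n))
    (g : Euc n → Euc n) (Dg : Euc n → Matrix (Fin n) (Fin n) ℝ) : Prop where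
  locInt : ∀ i : Fin n, LocallyIntegrableOn (fun x => g x i) Ω volume
  locIntD : ∀ i j : Fin n, LocallyIntegrableOn (fun x => Dg x i j) Ω volume
  parts : ∀ φ : Euc n → ℝ, ContDiff ℝ ((⊤ : ℕ∞) : WithTop ℕ∞) φ → HasCompactSupport φ →
    tsupport φ ⊆ Ω → ∀ i j : Fin n,
      ∫ x in Ω, g x i * fderiv ℝ φ x (EuclideanSpace.single j 1) =
        - ∫ x in Ω, Dg x i j * φ x
  lp : IntegrableOn (fun x => opNorm (Dg x) ^ p) Ω volume

/-- `g` belongs to the local Sobolev class `W^{1,1}_loc(Ω, ℝⁿ)` with weak differential `Dg`. -/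
structure MemSobolevLoc {n : ℕ} (Ω : Set (Euc n))
    (g : Euc n → Euc n) (Dg : Euc n → Matrix (Fin n) (Fin n) ℝ) : Prop where
  locInt : ∀ i : Fin n, LocallyIntegrableOn (fun x => g x i) Ω volume
  locIntD : ∀ i j : Fin n, LocallyIntegrableOn (fun x => Dg x i j) Ω volume
  parts : ∀ φ : Euc n → ℝ, ContDiff ℝ ((⊤ : ℕ∞) : WithTop ℕ∞) φ → HasCompactSupport φ →
    tsupport φ ⊆ Ω → ∀ i j : Fin n,
      ∫ x in Ω, g x i * fderiv ℝ φ x (EuclideanSpace.single j 1) =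
        - ∫ x in Ω, Dg x i j * φ x

/-- `h : 𝕏 → 𝕐` is a homeomorphism of `𝕏` onto `𝕐` with inverse `f`. -/
structure IsHomeoOn {n : ℕ} (h f : Euc n → Euc n) (𝕏 𝕐 : Set (Euc n)) : Prop where
  mapsTo : Set.MapsTo h 𝕏 𝕐
  mapsTo_inv : Set.MapsTo f 𝕐 𝕏
  left_inv : ∀ x ∈ 𝕏, f (h x) = x
  right_inv : ∀ y ∈ 𝕐, h (f y) = y
  continuousOn : ContinuousOn h 𝕏
  continuousOn_inv : ContinuousOn f 𝕐

/-- The inner distortion function `K_I(·, h)` of a Sobolev map with weak differential `Dh`;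
`D♯h` is the cofactor (adjugate) matrix, given by Cramer's rule `(D♯h)(Dh) = (det Dh)·Id`. -/
noncomputable def innerDistortion {n : ℕ} (Dh : Euc n → Matrix (Fin n) (Fin n) ℝ)
    (x : Euc n) : ℝ≥0∞ :=
  if 0 < (Dh x).det then
    ENNReal.ofReal (opNorm ((Dh x).adjugate) ^ n / (Dh x).det ^ (n - 1))
  else if (Dh x).adjugate = 0 then 1 else ⊤

/-- The open unit ball `𝔹 ⊂ ℝⁿ`. -/
def unitBall (n : ℕ) : Set (Euc n) := Metric.ball 0 1

/-- The slit `I = {(t,0) : 0 ≤ t < 1}`, the first coordinate playing the role of `t`. -/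
def slit (n : ℕ) [NeZero n] : Set (Euc n) :=
  {p | 0 ≤ p 0 ∧ p 0 < 1 ∧ ∀ i : Fin n, i ≠ 0 → p i = 0}

/-- The model inward-cusp ball `𝔹_u = 𝔹 \ {(t,x) : t ≥ 0, |x| ≤ u(t)}`. -/
noncomputable def cuspBall (n : ℕ) [NeZero n] (u : ℝ → ℝ) : Set (Euc n) :=
  Metric.ball 0 1 \
    {p | 0 ≤ p 0 ∧ Real.sqrt (∑ i ∈ Finset.univ.erase (0 : Fin n), p i ^ 2) ≤ u (p 0)}

/-- `u` is a model cusp profile: a strictly increasing continuous surjection of `[0,∞)` onto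
itself, `C¹` on `(0,∞)`, with `u′` increasing on `(0,∞)`, `u′(s) → 0` as `s → 0⁺`, `u(1) = 1`. -/
structure IsModelCusp (u : ℝ → ℝ) : Prop where
  continuousOn : ContinuousOn u (Set.Ici 0)
  contDiffOn : ContDiffOn ℝ 1 u (Set.Ioi 0)
  strictMonoOn : StrictMonoOn u (Set.Ici 0)
  mapsTo : Set.MapsTo u (Set.Ici 0) (Set.Ici 0)
  surjOn : Set.SurjOn u (Set.Ici 0) (Set.Ici 0)
  deriv_mono : MonotoneOn (deriv u) (Set.Ioi 0)
  deriv_tendsto : Filter.Tendsto (deriv u) (nhdsWithin 0 (Set.Ioi 0)) (nhds 0)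
  one : u 1 = 1

/-- The cusp profile `u(t) = e / exp(t^{-α})` for `t > 0`, and `u(0) = 0`. -/
noncomputable def cuspFun (α : ℝ) (t : ℝ) : ℝ :=
  if 0 < t then Real.exp 1 / Real.exp (t ^ (-α)) else 0

/-- The sphere `S_t = {y ∈ 𝔹_u : |y| = t}` inside the cusp ball. -/
def cuspS (n : ℕ) [NeZero n] (u : ℝ → ℝ) (t : ℝ) : Set (Euc n) :=
  {y ∈ cuspBall n u | ‖y‖ = t}

/-- The boundary circle `C_t = {y ∈ ∂𝔹_u : |y| = t}`. -/
def cuspC (n : ℕ) [NeZero n] (u : ℝ → ℝ) (t : ℝ) : Set (Euc n) :=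
  {y ∈ frontier (cuspBall n u) | ‖y‖ = t}

/-- `S′_t = h⁻¹(S_t) ⊆ 𝔹`. -/
def cuspS' (n : ℕ) [NeZero n] (u : ℝ → ℝ) (h : Euc n → Euc n) (t : ℝ) : Set (Euc n) :=
  {x ∈ unitBall n | h x ∈ cuspS n u t}

/-- `C′_t = cl(S′_t) ∩ ∂𝔹`. -/
def cuspC' (n : ℕ) [NeZero n] (u : ℝ → ℝ) (h : Euc n → Euc n) (t : ℝ) : Set (Euc n) :=
  closure (cuspS' n u h t) ∩ Metric.sphere (0 : Euc n) 1
lemma isConnected_iInter_antitone' {X : Type*} [TopologicalSpace X] [T2Space X] [NormalSpace X]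
    (A : ℕ → Set X) (hA : Antitone A) (hcpt : ∀ k, IsCompact (A k))
    (hconn : ∀ k, IsConnected (A k)) : IsConnected (⋂ k, A k) := by
  have hcl : ∀ k, IsClosed (A k) := fun k => (hcpt k).isClosed
  have hne : (⋂ k, A k).Nonempty :=
    IsCompact.nonempty_iInter_of_sequence_nonempty_isCompact_isClosed A
      (fun i => hA (Nat.le_succ i)) (fun i => (hconn i).nonempty) (hcpt 0) hcl
  refine ⟨hne, ?_⟩
  rw [isPreconnected_iff_subset_of_fully_disjoint_closed (isClosed_iInter hcl)]
  intro a b ha hb hab hdisj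
  rcases normal_separation ha hb hdisj with ⟨u, v, hu, hv, hau, hbv, huv⟩
  have hKuv : (⋂ k, A k) ⊆ u ∪ v := hab.trans (union_subset_union hau hbv)
  obtain ⟨k, hk⟩ : ∃ k, A k ⊆ u ∪ v := by
    by_contra h
    push_neg at h
    have h2 : ∀ k, (A k \ (u ∪ v)).Nonempty := fun k => by
      rcases Set.not_subset.mp (h k) with ⟨x, hx1, hx2⟩; exact ⟨x, hx1, hx2⟩
    have h3 : (⋂ k, A k \ (u ∪ v)).Nonempty :=
      IsCompact.nonempty_iInter_of_sequence_nonempty_isCompact_isClosed _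
        (fun i => diff_subset_diff_left (hA (Nat.le_succ i))) h2
        ((hcpt 0).diff (hu.union hv)) (fun i => (hcl i).sdiff (hu.union hv))
    rcases h3 with ⟨x, hx⟩
    simp only [Set.mem_iInter, Set.mem_diff] at hx
    exact (hx 0).2 (hKuv (Set.mem_iInter.mpr fun k => (hx k).1))
  have hsub : ∀ k', (⋂ j, A j) ⊆ A k' := fun k' => Set.iInter_subset A k'
  by_cases hku : (A k ∩ u).Nonempty
  · by_cases hkv : (A k ∩ v).Nonempty
    · rcases (hconn k).isPreconnected u v hu hv hk hku hkv with ⟨x, _, hx2⟩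
      exact absurd rfl (huv.ne_of_mem hx2.1 hx2.2)
    · left
      intro x hx
      rcases hab hx with h' | h'
      · exact h'
      · exact absurd ⟨hsub k hx, hbv h'⟩ (fun hc => hkv ⟨x, hc⟩)
  · right
    intro x hx
    rcases hab hx with h' | h'
    · exact absurd ⟨hsub k hx, hau h'⟩ (fun hc => hku ⟨x, hc⟩)
    · exact h'

/-- A continuous surjection `G : cl(𝔹) → cl(𝔹)` restricting to a
homeomorphism of `𝔹` onto `𝔹` maps `∂𝔹` onto `∂𝔹` and is monotone on `∂𝔹`: the preimage of
each boundary point is a connected subset of `∂𝔹`. -/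
theorem stmt_11 {n : ℕ} (hn : 2 ≤ n) (G g : Euc n → Euc n)
    (hGc : ContinuousOn G (Metric.closedBall (0 : Euc n) 1))
    (hGmaps : Set.MapsTo G (Metric.closedBall (0 : Euc n) 1) (Metric.closedBall (0 : Euc n) 1))
    (hGsurj : Set.SurjOn G (Metric.closedBall (0 : Euc n) 1) (Metric.closedBall (0 : Euc n) 1))
    (hGhomeo : IsHomeoOn G g (Metric.ball (0 : Euc n) 1) (Metric.ball (0 : Euc n) 1)) :
    Set.MapsTo G (Metric.sphere (0 : Euc n) 1) (Metric.sphere (0 : Euc n) 1) ∧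
    Set.SurjOn G (Metric.sphere (0 : Euc n) 1) (Metric.sphere (0 : Euc n) 1) ∧
    ∀ y ∈ Metric.sphere (0 : Euc n) 1,
      {x ∈ Metric.closedBall (0 : Euc n) 1 | G x = y} ⊆ Metric.sphere (0 : Euc n) 1 ∧
      IsConnected {x ∈ Metric.closedBall (0 : Euc n) 1 | G x = y} := by
  -- radial approximating sequence
  have hradial : ∀ x : Euc n, x ∈ Metric.sphere (0 : Euc n) 1 →
      ∃ z : ℕ → Euc n, (∀ j, z j ∈ Metric.ball (0 : Euc n) 1) ∧
        Filter.Tendsto z Filter.atTop (nhds x) := by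
    intro x hx
    have hx1 : ‖x‖ = 1 := by simpa using hx
    refine ⟨fun j => (1 - 1 / ((j : ℝ) + 1)) • x, fun j => ?_, ?_⟩
    · have h1 : (0 : ℝ) < 1 / ((j : ℝ) + 1) := by positivity
      have h2 : 1 / ((j : ℝ) + 1) ≤ 1 := by
        rw [div_le_one (by positivity)]; linarith [Nat.cast_nonneg (α := ℝ) j]
      rw [mem_ball, dist_zero_right, norm_smul, hx1, mul_one, Real.norm_eq_abs,
        abs_of_nonneg (by linarith)]
      linarith
    · have ht : Filter.Tendsto (fun j : ℕ => (1 - 1 / ((j : ℝ) + 1))) Filter.atTop (nhds 1) := by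
        have := tendsto_one_div_add_atTop_nhds_zero_nat (𝕜 := ℝ)
        simpa using (tendsto_const_nhds (x := (1 : ℝ)) (f := Filter.atTop)).sub this
      simpa using ht.smul_const x
  -- G of a sequence in the ball tending to a closed-ball point tends to G of the point
  have hGseq : ∀ x : Euc n, x ∈ Metric.closedBall (0 : Euc n) 1 →
      ∀ z : ℕ → Euc n, (∀ j, z j ∈ Metric.ball (0 : Euc n) 1) →
      Filter.Tendsto z Filter.atTop (nhds x) →
      Filter.Tendsto (fun j => G (z j)) Filter.atTop (nhds (G x)) := by
    intro x hx z hzb hzx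
    exact (hGc x hx).tendsto.comp
      (tendsto_nhdsWithin_of_tendsto_nhds_of_eventually_within z hzx
        (Filter.Eventually.of_forall fun j => ball_subset_closedBall (hzb j)))
  -- fibers of sphere points avoid the open ball
  have hfiber : ∀ y ∈ Metric.sphere (0 : Euc n) 1, ∀ x ∈ Metric.closedBall (0 : Euc n) 1,
      G x = y → x ∈ Metric.sphere (0 : Euc n) 1 := by
    intro y hy x hx hGxy
    rcases (mem_closedBall.mp hx).lt_or_eq with h | h
    · exfalso
      have : G x ∈ Metric.ball (0 : Euc n) 1 := hGhomeo.mapsTo (mem_ball.mpr h)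
      rw [hGxy, mem_ball, dist_zero_right] at this
      have := mem_sphere_zero_iff_norm.mp hy
      linarith
    · exact mem_sphere_zero_iff_norm.mpr (by rwa [← dist_zero_right])
  -- G maps the sphere to the sphere
  have hmaps : Set.MapsTo G (Metric.sphere (0 : Euc n) 1) (Metric.sphere (0 : Euc n) 1) := by
    intro x hx
    have hxcB : x ∈ Metric.closedBall (0 : Euc n) 1 := sphere_subset_closedBall hx
    rcases (mem_closedBall.mp (hGmaps hxcB)).lt_or_eq with h | h
    · exfalso
      have hGxB : G x ∈ Metric.ball (0 : Euc n) 1 := mem_ball.mpr h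
      obtain ⟨z, hzb, hzx⟩ := hradial x hx
      have h1 := hGseq x hxcB z hzb hzx
      have h2 : Filter.Tendsto (fun j => g (G (z j))) Filter.atTop (nhds (g (G x))) :=
        ((hGhomeo.continuousOn_inv.continuousAt (isOpen_ball.mem_nhds hGxB)).tendsto).comp h1
      have h3 : ∀ j, g (G (z j)) = z j := fun j => hGhomeo.left_inv _ (hzb j)
      have h4 : g (G x) = x := tendsto_nhds_unique (by simpa [funext h3] using h2) hzx
      have h5 : x ∈ Metric.ball (0 : Euc n) 1 := h4 ▸ hGhomeo.mapsTo_inv hGxB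
      rw [mem_ball, dist_zero_right] at h5
      have := mem_sphere_zero_iff_norm.mp hx
      linarith
    · exact mem_sphere_zero_iff_norm.mpr (by rwa [← dist_zero_right])
  refine ⟨hmaps, ?_, ?_⟩
  · -- surjectivity on the sphere
    intro y hy
    obtain ⟨x, hx, hGxy⟩ := hGsurj (sphere_subset_closedBall hy)
    exact ⟨x, hfiber y hy x hx hGxy, hGxy⟩
  · intro y hy
    have hFsub : {x ∈ Metric.closedBall (0 : Euc n) 1 | G x = y} ⊆ Metric.sphere (0 : Euc n) 1 :=
      fun x hx => hfiber y hy x hx.1 hx.2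
    refine ⟨hFsub, ?_⟩
    set A : ℕ → Set (Euc n) := fun k =>
      closure (g '' (Metric.ball y (1 / ((k : ℝ) + 1)) ∩ Metric.ball (0 : Euc n) 1)) with hA
    have hdpos : ∀ k : ℕ, (0 : ℝ) < 1 / ((k : ℝ) + 1) := fun k => by positivity
    have himg : ∀ k, g '' (Metric.ball y (1 / ((k : ℝ) + 1)) ∩ Metric.ball (0 : Euc n) 1)
        ⊆ Metric.ball (0 : Euc n) 1 := fun k => by
      rintro _ ⟨v, ⟨_, hv2⟩, rfl⟩; exact hGhomeo.mapsTo_inv hv2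
    have hAcB : ∀ k, A k ⊆ Metric.closedBall (0 : Euc n) 1 := fun k =>
      closure_minimal ((himg k).trans ball_subset_closedBall) Metric.isClosed_closedBall
    have hanti : Antitone A := by
      intro k l hkl
      refine closure_mono (Set.image_mono (Set.inter_subset_inter_left _ (ball_subset_ball ?_)))
      apply one_div_le_one_div_of_le (by positivity)
      have : (k : ℝ) ≤ (l : ℝ) := Nat.cast_le.mpr hkl
      linarith
    have hcpt : ∀ k, IsCompact (A k) := fun k =>
      (isCompact_closedBall (0 : Euc n) 1).of_isClosed_subset isClosed_closure (hAcB k)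
    have hconn : ∀ k, IsConnected (A k) := by
      intro k
      refine IsConnected.closure (IsConnected.image ?_ g
        (hGhomeo.continuousOn_inv.mono Set.inter_subset_right))
      constructor
      · -- nonempty: the point (1 - δ/2) • y
        refine ⟨(1 - 1 / (2 * ((k : ℝ) + 1))) • y, ?_, ?_⟩
        · have hy1 : ‖y‖ = 1 := mem_sphere_zero_iff_norm.mp hy
          rw [mem_ball, dist_eq_norm]
          have heq : (1 - 1 / (2 * ((k : ℝ) + 1))) • y - y
              = -((1 / (2 * ((k : ℝ) + 1))) • y) := by module
          rw [heq, norm_neg, norm_smul, hy1, mul_one, Real.norm_eq_abs,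
            abs_of_nonneg (by positivity)]
          rw [div_lt_div_iff₀ (by positivity) (by positivity)]
          nlinarith [Nat.cast_nonneg (α := ℝ) k]
        · have hy1 : ‖y‖ = 1 := mem_sphere_zero_iff_norm.mp hy
          have h1 : (0 : ℝ) < 1 / (2 * ((k : ℝ) + 1)) := by positivity
          have h2 : 1 / (2 * ((k : ℝ) + 1)) ≤ 1 := by
            rw [div_le_one (by positivity)]; linarith [Nat.cast_nonneg (α := ℝ) k]
          rw [mem_ball, dist_zero_right, norm_smul, hy1, mul_one, Real.norm_eq_abs,
            abs_of_nonneg (by linarith)]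
          linarith
      · exact ((convex_ball y _).inter (convex_ball 0 1)).isPreconnected
    have hFeq : {x ∈ Metric.closedBall (0 : Euc n) 1 | G x = y} = ⋂ k, A k := by
      ext x
      constructor
      · rintro ⟨hxcB, hGxy⟩
        have hxS : x ∈ Metric.sphere (0 : Euc n) 1 := hfiber y hy x hxcB hGxy
        obtain ⟨z, hzb, hzx⟩ := hradial x hxS
        have h1 := hGseq x hxcB z hzb hzx
        rw [hGxy] at h1
        refine Set.mem_iInter.mpr fun k => ?_
        have hev : ∀ᶠ j in Filter.atTop, G (z j) ∈ Metric.ball y (1 / ((k : ℝ) + 1)) :=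
          h1 (isOpen_ball.mem_nhds (mem_ball_self (hdpos k)))
        refine mem_closure_of_tendsto hzx ?_
        filter_upwards [hev] with j hj
        exact ⟨G (z j), ⟨hj, hGhomeo.mapsTo (hzb j)⟩, hGhomeo.left_inv _ (hzb j)⟩
      · intro hx
        have hx' : ∀ k, x ∈ A k := Set.mem_iInter.mp hx
        have hxcB : x ∈ Metric.closedBall (0 : Euc n) 1 := hAcB 0 (hx' 0)
        refine ⟨hxcB, ?_⟩
        have hdk : ∀ k : ℕ, dist (G x) y ≤ 1 / ((k : ℝ) + 1) := by
          intro k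
          set s := g '' (Metric.ball y (1 / ((k : ℝ) + 1)) ∩ Metric.ball (0 : Euc n) 1)
          have hGs : G '' s ⊆ Metric.ball y (1 / ((k : ℝ) + 1)) := by
            rintro _ ⟨_, ⟨v, ⟨hv1, hv2⟩, rfl⟩, rfl⟩
            rwa [hGhomeo.right_inv v hv2]
          have hGcs : ContinuousOn G (closure s) := hGc.mono (hAcB k)
          have : G x ∈ closure (G '' s) := hGcs.image_closure ⟨x, hx' k, rfl⟩
          have : G x ∈ closure (Metric.ball y (1 / ((k : ℝ) + 1))) :=
            closure_mono hGs this
          have := (closure_ball_subset_closedBall) this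
          rwa [mem_closedBall] at this
        have : dist (G x) y ≤ 0 :=
          ge_of_tendsto' tendsto_one_div_add_atTop_nhds_zero_nat hdk
        exact dist_le_zero.mp this
    rw [hFeq]
    exact isConnected_iInter_antitone' A hanti hcpt hconn
end
end

section
/- Let n ≥ 3, let 𝔹_u be a model inward-cusp ball, let h : 𝔹 → 𝔹_u be a homeomorphism in W^{1,n}(𝔹, ℝⁿ), and let H : cl(𝔹) → cl(𝔹_u) be a continuous extension of h. Then for every 0 < t < 1 one has H(C′_t) = C_t, where S_t = {y ∈ 𝔹_u : |y| = t}, C_t = {y ∈ ∂𝔹_u : |y| = t}, S′_t = h⁻¹(S_t), and C′_t = cl(S′_t) ∩ ∂𝔹. -/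
open MeasureTheory Metric Set
open scoped ENNReal NNReal

noncomputable section

section Aux

variable {n : ℕ} [NeZero n]

/-- transverse radius squared -/
def trr (n : ℕ) [NeZero n] (p : Euc n) : ℝ := ∑ i ∈ Finset.univ.erase (0 : Fin n), p i ^ 2

lemma trr_nonneg (p : Euc n) : 0 ≤ trr n p :=
  Finset.sum_nonneg fun i _ => sq_nonneg _

lemma norm_sq_eq (p : Euc n) : ‖p‖ ^ 2 = p 0 ^ 2 + trr n p := by
  have h1 : ‖p‖ = Real.sqrt (∑ i, ‖p i‖ ^ 2) := EuclideanSpace.norm_eq p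
  have h2 : (∑ i, ‖p i‖ ^ 2) = p 0 ^ 2 + trr n p := by
    rw [trr, ← Finset.add_sum_erase (a := (0 : Fin n)) _ _ (Finset.mem_univ _)]
    simp [Real.norm_eq_abs, sq_abs]
  rw [h1, h2, Real.sq_sqrt]
  have h3 := trr_nonneg (n := n) p
  nlinarith [sq_nonneg (p 0)]

lemma u_zero (u : ℝ → ℝ) (hu : IsModelCusp u) : u 0 = 0 := by
  rcases hu.surjOn (Set.mem_Ici.mpr (le_refl 0)) with ⟨s, hs, hus⟩
  rcases eq_or_lt_of_le (Set.mem_Ici.mp hs) with h | h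
  · rw [← h] at hus; linarith [hus]
  · have h0 : u 0 < u s := hu.strictMonoOn (Set.mem_Ici.mpr le_rfl) hs h
    have h1 : 0 ≤ u 0 := hu.mapsTo (Set.mem_Ici.mpr le_rfl)
    have := hus ▸ h0
    linarith

lemma isClosed_K (u : ℝ → ℝ) (hu : IsModelCusp u) :
    IsClosed {p : Euc n | 0 ≤ p 0 ∧ Real.sqrt (∑ i ∈ Finset.univ.erase (0 : Fin n), p i ^ 2) ≤ u (p 0)} := by
  rw [← isSeqClosed_iff_isClosed]
  intro x p hx hxp
  have hc : Continuous (fun q : Euc n => q 0) :=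
    (continuous_apply (0 : Fin n)).comp (PiLp.continuous_ofLp 2 (fun _ : Fin n => ℝ))
  have hr : Continuous (fun q : Euc n => Real.sqrt (∑ i ∈ Finset.univ.erase (0 : Fin n), q i ^ 2)) := by
    apply Real.continuous_sqrt.comp
    apply continuous_finset_sum
    intro i _
    exact ((continuous_apply i).comp (PiLp.continuous_ofLp 2 (fun _ : Fin n => ℝ))).pow 2
  have h0 : Filter.Tendsto (fun k => x k 0) Filter.atTop (nhds (p 0)) :=
    (hc.tendsto p).comp hxp
  constructor
  · exact le_of_tendsto_of_tendsto tendsto_const_nhds h0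
      (Filter.Eventually.of_forall fun k => (hx k).1)
  · have hru : Filter.Tendsto (fun k => u (x k 0)) Filter.atTop (nhds (u (p 0))) := by
      have hp0 : p 0 ∈ Set.Ici (0 : ℝ) :=
        le_of_tendsto_of_tendsto tendsto_const_nhds h0
          (Filter.Eventually.of_forall fun k => (hx k).1)
      have := (hu.continuousOn (p 0) hp0).tendsto
      exact this.comp (tendsto_nhdsWithin_iff.mpr
        ⟨h0, Filter.Eventually.of_forall fun k => (hx k).1⟩)
    exact le_of_tendsto_of_tendsto ((hr.tendsto p).comp hxp) hru
      (Filter.Eventually.of_forall fun k => (hx k).2)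

end Aux


section Aux2

variable {n : ℕ} [NeZero n]

lemma isOpen_cuspBall (u : ℝ → ℝ) (hu : IsModelCusp u) : IsOpen (cuspBall n u) :=
  isOpen_ball.sdiff (isClosed_K u hu)

/-- Structure of frontier points of the cusp ball at radius `t < 1`. -/
lemma frontier_struct (u : ℝ → ℝ) (hu : IsModelCusp u) {t : ℝ} (ht0 : 0 < t) (ht1 : t < 1)
    {y : Euc n} (hy : y ∈ frontier (cuspBall n u)) (hyt : ‖y‖ = t) :
    0 < y 0 ∧ Real.sqrt (trr n y) = u (y 0) := by
  have hyball : y ∈ ball (0 : Euc n) 1 := by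
    rw [mem_ball, dist_zero_right, hyt]; exact ht1
  have hopen := isOpen_cuspBall (n := n) u hu
  have hnotmem : y ∉ cuspBall n u := by
    rw [hopen.frontier_eq] at hy; exact hy.2
  have hyK : 0 ≤ y 0 ∧ Real.sqrt (∑ i ∈ Finset.univ.erase (0 : Fin n), y i ^ 2) ≤ u (y 0) := by
    by_contra hK
    exact hnotmem ⟨hyball, hK⟩
  have hclos : y ∈ closure (cuspBall n u) := hy.1
  -- y 0 > 0
  have hy0 : 0 < y 0 := by
    rcases eq_or_lt_of_le hyK.1 with h | h
    · exfalso
      have hr0 : Real.sqrt (trr n y) ≤ 0 := by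
        have := hyK.2
        rw [← h, u_zero u hu] at this
        exact this
      have htr : trr n y = 0 := by
        have h1 := Real.sqrt_nonneg (trr n y)
        have h2 : Real.sqrt (trr n y) = 0 := le_antisymm hr0 h1
        have := trr_nonneg (n := n) y
        nlinarith [Real.sq_sqrt this, h2]
      have : ‖y‖ ^ 2 = 0 := by rw [norm_sq_eq, ← h, htr]; ring
      rw [hyt] at this
      nlinarith
    · exact h
  refine ⟨hy0, ?_⟩
  -- if sqrt (trr) < u (y 0), then y is interior to K, contradicting closure membership
  rcases eq_or_lt_of_le hyK.2 with h | h
  · exact h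
  exfalso
  have hKnhds : {p : Euc n | 0 ≤ p 0 ∧
      Real.sqrt (∑ i ∈ Finset.univ.erase (0 : Fin n), p i ^ 2) ≤ u (p 0)} ∈ nhds y := by
    have hc : Continuous (fun q : Euc n => q 0) :=
      (continuous_apply (0 : Fin n)).comp (PiLp.continuous_ofLp 2 (fun _ : Fin n => ℝ))
    have hr : Continuous (fun q : Euc n =>
        Real.sqrt (∑ i ∈ Finset.univ.erase (0 : Fin n), q i ^ 2)) := by
      apply Real.continuous_sqrt.comp
      apply continuous_finset_sum
      intro i _
      exact ((continuous_apply i).comp (PiLp.continuous_ofLp 2 (fun _ : Fin n => ℝ))).pow 2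
    have huc : ContinuousAt u (y 0) :=
      hu.continuousOn.continuousAt (Ici_mem_nhds hy0)
    have hg : ContinuousAt (fun q : Euc n =>
        u (q 0) - Real.sqrt (∑ i ∈ Finset.univ.erase (0 : Fin n), q i ^ 2)) y :=
      (ContinuousAt.comp (x := y) huc hc.continuousAt).sub hr.continuousAt
    have hpos : (0 : ℝ) < u (y 0) - Real.sqrt (∑ i ∈ Finset.univ.erase (0 : Fin n), y i ^ 2) := by
      linarith
    have h1 : ∀ᶠ q : Euc n in nhds y, 0 < u (q 0) -
        Real.sqrt (∑ i ∈ Finset.univ.erase (0 : Fin n), q i ^ 2) :=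
      hg.eventually (eventually_gt_nhds hpos)
    have h2 : ∀ᶠ q : Euc n in nhds y, 0 < q 0 :=
      hc.continuousAt.eventually (eventually_gt_nhds hy0)
    filter_upwards [h1, h2] with q hq1 hq2
    exact ⟨le_of_lt hq2, by linarith⟩
  have hyint : y ∈ interior {p : Euc n | 0 ≤ p 0 ∧
      Real.sqrt (∑ i ∈ Finset.univ.erase (0 : Fin n), p i ^ 2) ≤ u (p 0)} :=
    mem_interior_iff_mem_nhds.mpr hKnhds
  have hsub : cuspBall n u ⊆ {p : Euc n | 0 ≤ p 0 ∧
      Real.sqrt (∑ i ∈ Finset.univ.erase (0 : Fin n), p i ^ 2) ≤ u (p 0)}ᶜ :=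
    fun p hp => hp.2
  have hmem := closure_mono hsub hclos
  rw [closure_compl] at hmem
  exact hmem hyint

end Aux2


section Aux3

variable {n : ℕ} [NeZero n]

/-- Every frontier point of the cusp ball at radius `t ∈ (0,1)` is a limit of points
of `S_t`. -/
lemma mem_closure_cuspS (u : ℝ → ℝ) (hu : IsModelCusp u) {t : ℝ} (ht0 : 0 < t) (ht1 : t < 1)
    {y : Euc n} (hy : y ∈ frontier (cuspBall n u)) (hyt : ‖y‖ = t) :
    y ∈ closure (cuspS n u t) := by
  obtain ⟨hy0, hyr⟩ := frontier_struct u hu ht0 ht1 hy hyt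
  set r : ℝ := Real.sqrt (trr n y) with hrdef
  have hrsq : r ^ 2 = trr n y := Real.sq_sqrt (trr_nonneg y)
  have hr_pos : 0 < r := by
    rw [hyr]
    have := u_zero u hu
    have h2 := hu.strictMonoOn (Set.mem_Ici.mpr le_rfl) (Set.mem_Ici.mpr hy0.le) hy0
    linarith
  have hsum : y 0 ^ 2 + r ^ 2 = t ^ 2 := by
    rw [hrsq, ← norm_sq_eq, hyt]
  have hy0t : y 0 < t := by nlinarith
  -- the curve on the sphere of radius t
  set c : ℝ → ℝ := fun s => Real.sqrt (t ^ 2 - s ^ 2) / r with hcdef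
  set v : ℝ → (Fin n → ℝ) := fun s i => if i = 0 then s else c s * y i with hvdef
  set w : ℝ → Euc n := fun s => (WithLp.equiv 2 (Fin n → ℝ)).symm (v s) with hwdef
  have hwcoord : ∀ s i, w s i = v s i := fun s i => rfl
  have hwtrr : ∀ s ∈ Set.Ioo (0:ℝ) (y 0), trr n (w s) = t ^ 2 - s ^ 2 := by
    intro s hs
    have hts : 0 ≤ t ^ 2 - s ^ 2 := by
      rcases hs with ⟨h1, h2⟩
      nlinarith
    rw [trr]
    have : ∀ i ∈ Finset.univ.erase (0 : Fin n), w s i ^ 2 = c s ^ 2 * y i ^ 2 := by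
      intro i hi
      simp only [Finset.mem_erase] at hi
      simp only [hwcoord, hvdef, if_neg hi.1]
      ring
    rw [Finset.sum_congr rfl this, ← Finset.mul_sum]
    have htrr : (∑ i ∈ Finset.univ.erase (0 : Fin n), y i ^ 2) = trr n y := rfl
    rw [htrr, ← hrsq, hcdef]
    have : (Real.sqrt (t ^ 2 - s ^ 2) / r) ^ 2 = (t ^ 2 - s ^ 2) / r ^ 2 := by
      rw [div_pow, Real.sq_sqrt hts]
    rw [this]
    field_simp
  have hwnorm : ∀ s ∈ Set.Ioo (0:ℝ) (y 0), ‖w s‖ = t := by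
    intro s hs
    have h1 : ‖w s‖ ^ 2 = t ^ 2 := by
      rw [norm_sq_eq, hwtrr s hs]
      simp only [hwcoord, hvdef, if_pos rfl]
      ring
    have : ‖w s‖ = Real.sqrt (t ^ 2) := by
      rw [← h1, Real.sqrt_sq (norm_nonneg _)]
    rw [this, Real.sqrt_sq ht0.le]
  have hwmem : ∀ s ∈ Set.Ioo (0:ℝ) (y 0), w s ∈ cuspS n u t := by
    intro s hs
    rcases hs with ⟨hs0, hsy⟩
    refine ⟨⟨?_, ?_⟩, hwnorm s ⟨hs0, hsy⟩⟩
    · rw [mem_ball, dist_zero_right, hwnorm s ⟨hs0, hsy⟩]; exact ht1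
    · rintro ⟨-, hle⟩
      have hws0 : w s 0 = s := by simp only [hwcoord, hvdef, if_pos rfl]
      rw [hws0] at hle
      have h1 : (∑ i ∈ Finset.univ.erase (0 : Fin n), w s i ^ 2) = t ^ 2 - s ^ 2 :=
        hwtrr s ⟨hs0, hsy⟩
      rw [h1] at hle
      have h2 : u s < u (y 0) := hu.strictMonoOn (Set.mem_Ici.mpr hs0.le)
        (Set.mem_Ici.mpr hy0.le) hsy
      have h3 : r < Real.sqrt (t ^ 2 - s ^ 2) := by
        have : r ^ 2 < t ^ 2 - s ^ 2 := by nlinarith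
        have h4 : r = Real.sqrt (r ^ 2) := (Real.sqrt_sq hr_pos.le).symm
        rw [h4]
        exact Real.sqrt_lt_sqrt (sq_nonneg r) this
      rw [← hyr] at h2
      linarith
  -- the curve tends to y as s → y 0
  have hceval : c (y 0) = 1 := by
    rw [hcdef]
    have : t ^ 2 - y 0 ^ 2 = r ^ 2 := by linarith
    simp only [this, Real.sqrt_sq hr_pos.le]
    field_simp
  have hvt : Filter.Tendsto v (nhds (y 0)) (nhds (fun i => y i)) := by
    rw [tendsto_pi_nhds]
    intro i
    by_cases hi : i = 0
    · subst hi
      simp only [hvdef, if_pos rfl]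
      exact Filter.tendsto_id
    · simp only [hvdef, if_neg hi]
      have hcc : ContinuousAt c (y 0) := by
        apply ContinuousAt.div
        · exact (Real.continuous_sqrt.comp (by continuity)).continuousAt
        · exact continuousAt_const
        · exact hr_pos.ne'
      have : Filter.Tendsto (fun s => c s * y i) (nhds (y 0)) (nhds (c (y 0) * y i)) :=
        hcc.mul continuousAt_const
      rwa [hceval, one_mul] at this
  have hwt : Filter.Tendsto w (nhdsWithin (y 0) (Set.Ioo 0 (y 0))) (nhds y) := by
    have hconv : Filter.Tendsto w (nhds (y 0)) (nhds y) := by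
      have hcont : Continuous ((WithLp.equiv 2 (Fin n → ℝ)).symm : (Fin n → ℝ) → Euc n) :=
        PiLp.continuous_toLp 2 (fun _ : Fin n => ℝ)
      have := (hcont.tendsto (fun i => y i)).comp hvt
      convert this using 2 <;> rfl
    exact hconv.mono_left nhdsWithin_le_nhds
  have hne : (nhdsWithin (y 0) (Set.Ioo 0 (y 0))).NeBot := by
    rw [← mem_closure_iff_nhdsWithin_neBot, closure_Ioo hy0.ne]
    exact ⟨hy0.le, le_rfl⟩
  exact mem_closure_of_tendsto hwt
    (eventually_mem_nhdsWithin.mono (fun s hs => hwmem s hs))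

end Aux3

/-- With `h : 𝔹 → 𝔹_u` a `W^{1,n}`-homeomorphism and `H` a continuous
extension, `H(C′_t) = C_t` for every `0 < t < 1`. -/
theorem stmt_13 {n : ℕ} [NeZero n] (hn : 3 ≤ n) (u : ℝ → ℝ) (hu : IsModelCusp u)
    (h f : Euc n → Euc n) (hhf : IsHomeoOn h f (unitBall n) (cuspBall n u))
    (Dh : Euc n → Matrix (Fin n) (Fin n) ℝ)
    (hSob : MemSobolev (n : ℝ) (unitBall n) h Dh)
    (H : Euc n → Euc n) (hHc : ContinuousOn H (closure (unitBall n)))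
    (hHmaps : Set.MapsTo H (closure (unitBall n)) (closure (cuspBall n u)))
    (hHeq : Set.EqOn H h (unitBall n)) :
    ∀ t : ℝ, 0 < t → t < 1 → H '' cuspC' n u h t = cuspC n u t := by
  intro t ht0 ht1
  have hopen := isOpen_cuspBall (n := n) u hu
  have hclU : closure (unitBall n) = closedBall (0 : Euc n) 1 := by
    rw [unitBall]; exact closure_ball 0 one_ne_zero
  have hsub_cl : unitBall n ⊆ closure (unitBall n) := subset_closure
  apply Set.Subset.antisymm
  · -- H '' C'_t ⊆ C_t
    rintro _ ⟨x, ⟨hxcl, hxsph⟩, rfl⟩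
    have hxcl' : x ∈ closure (unitBall n) := by
      rw [hclU]; exact sphere_subset_closedBall hxsph
    obtain ⟨xk, hxk, hxklim⟩ := mem_closure_iff_seq_limit.mp hxcl
    have hxkU : ∀ k, xk k ∈ unitBall n := fun k => (hxk k).1
    have hxkS : ∀ k, h (xk k) ∈ cuspBall n u ∧ ‖h (xk k)‖ = t := fun k => (hxk k).2
    -- H (xk) → H x
    have hHx : Filter.Tendsto (fun k => h (xk k)) Filter.atTop (nhds (H x)) := by
      have h1 : Filter.Tendsto xk Filter.atTop (nhdsWithin x (closure (unitBall n))) :=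
        tendsto_nhdsWithin_iff.mpr ⟨hxklim,
          Filter.Eventually.of_forall fun k => hsub_cl (hxkU k)⟩
      have h2 := (hHc x hxcl').tendsto.comp h1
      exact h2.congr fun k => hHeq (hxkU k)
    -- ‖H x‖ = t
    have hnorm : ‖H x‖ = t := by
      have h1 : Filter.Tendsto (fun k => ‖h (xk k)‖) Filter.atTop (nhds ‖H x‖) :=
        (continuous_norm.tendsto _).comp hHx
      have h2 : Filter.Tendsto (fun _ : ℕ => t) Filter.atTop (nhds t) := tendsto_const_nhds
      exact tendsto_nhds_unique (h1.congr fun k => (hxkS k).2) h2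
    have hHcl : H x ∈ closure (cuspBall n u) := hHmaps hxcl'
    have hHnot : H x ∉ cuspBall n u := by
      intro hmem
      have hfc : ContinuousAt f (H x) :=
        hhf.continuousOn_inv.continuousAt (hopen.mem_nhds hmem)
      have h1 : Filter.Tendsto (fun k => f (h (xk k))) Filter.atTop (nhds (f (H x))) :=
        hfc.tendsto.comp hHx
      have h2 : Filter.Tendsto xk Filter.atTop (nhds (f (H x))) :=
        h1.congr fun k => by rw [hhf.left_inv _ (hxkU k)]
      have hxeq : x = f (H x) := tendsto_nhds_unique hxklim h2
      have : x ∈ unitBall n := hxeq ▸ hhf.mapsTo_inv hmem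
      rw [unitBall, mem_ball, dist_zero_right] at this
      rw [mem_sphere_iff_norm, sub_zero] at hxsph
      linarith [hxsph ▸ this]
    refine ⟨?_, hnorm⟩
    rw [hopen.frontier_eq]
    exact ⟨hHcl, hHnot⟩
  · -- C_t ⊆ H '' C'_t
    rintro y ⟨hyfr, hyt⟩
    have hyclS : y ∈ closure (cuspS n u t) := mem_closure_cuspS u hu ht0 ht1 hyfr hyt
    obtain ⟨yk, hyk, hyklim⟩ := mem_closure_iff_seq_limit.mp hyclS
    set xk : ℕ → Euc n := fun k => f (yk k) with hxkdef
    have hxkU : ∀ k, xk k ∈ unitBall n := fun k => hhf.mapsTo_inv (hyk k).1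
    have hhxk : ∀ k, h (xk k) = yk k := fun k => hhf.right_inv _ (hyk k).1
    have hxkS' : ∀ k, xk k ∈ cuspS' n u h t := fun k =>
      ⟨hxkU k, by rw [hhxk k]; exact hyk k⟩
    obtain ⟨x, hxcb, φ, hφ, hxlim⟩ := (isCompact_closedBall (0 : Euc n) 1).tendsto_subseq
      (fun k => ball_subset_closedBall (hxkU k))
    have hxcl' : x ∈ closure (unitBall n) := by rw [hclU]; exact hxcb
    have hxclS' : x ∈ closure (cuspS' n u h t) :=
      mem_closure_of_tendsto hxlim (Filter.Eventually.of_forall fun k => hxkS' (φ k))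
    -- H x = y
    have hHx : H x = y := by
      have h1 : Filter.Tendsto (xk ∘ φ) Filter.atTop (nhdsWithin x (closure (unitBall n))) :=
        tendsto_nhdsWithin_iff.mpr ⟨hxlim,
          Filter.Eventually.of_forall fun k => hsub_cl (hxkU (φ k))⟩
      have h2 := (hHc x hxcl').tendsto.comp h1
      have h3 : Filter.Tendsto (fun k => yk (φ k)) Filter.atTop (nhds (H x)) :=
        h2.congr fun k => by
          show H (xk (φ k)) = yk (φ k)
          rw [hHeq (hxkU (φ k)), hhxk (φ k)]
      have h4 : Filter.Tendsto (fun k => yk (φ k)) Filter.atTop (nhds y) :=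
        hyklim.comp hφ.tendsto_atTop
      exact tendsto_nhds_unique h3 h4
    have hxnotU : x ∉ unitBall n := by
      intro hxU
      have : h x ∈ cuspBall n u := hhf.mapsTo hxU
      rw [← hHeq hxU, hHx] at this
      rw [hopen.frontier_eq] at hyfr
      exact hyfr.2 this
    have hxsph : x ∈ Metric.sphere (0 : Euc n) 1 := by
      rw [mem_sphere_iff_norm, sub_zero]
      rw [mem_closedBall, dist_zero_right] at hxcb
      rcases eq_or_lt_of_le hxcb with h | h
      · exact h
      · exact absurd (by rw [unitBall, mem_ball, dist_zero_right]; exact h) hxnotU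
    exact ⟨x, ⟨hxclS', hxsph⟩, hHx⟩
end
end
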